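/- Let X be a real Banach space and A : X ⇉ X* a maximal monotone operator with Fitzpatrick function H_A. Then 0 ∈ R(J_X + A) if and only if (0, 0) ∈ R(J_X ⊗ J_X^{-1} + ∂H_A), where (J_X ⊗ J_X^{-1})(x, x*) = J_X(x) × J_X^{-1}(x*). -/
import Mathlib


noncomputable section

variable {X : Type*} [NormedAddCommGroup X] [NormedSpace ℝ X] [CompleteSpace X]

/-- The subdifferential of an extended-real-valued function `φ : X → (-∞,+∞]`,
viewed as a subset of `X × X*`: `(x, x*) ∈ ∂φ` iff `⟨y - x, x*⟩ + φ(x) ≤ φ(y)` for all `y`. -/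
def subdiff (φ : X → EReal) : Set (X × (X →L[ℝ] ℝ)) :=
  {p | ∀ y : X, ((p.2 (y - p.1) : ℝ) : EReal) + φ p.1 ≤ φ y}

/-- Convexity for extended-real-valued functions. -/
def ERealConvexOn {E : Type*} [AddCommGroup E] [Module ℝ E] (φ : E → EReal) : Prop :=
  ∀ x y : E, ∀ a b : ℝ, 0 ≤ a → 0 ≤ b → a + b = 1 →
    φ (a • x + b • y) ≤ (a : EReal) * φ x + (b : EReal) * φ y

/-- A function `X → (-∞,+∞]` is proper: it never takes the value `-∞` and is
finite somewhere. -/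
def ProperFn {E : Type*} (φ : E → EReal) : Prop :=
  (∀ x, φ x ≠ ⊥) ∧ (∃ x, φ x ≠ ⊤)

/-- The duality mapping `J_X(x) = {x* : ⟨x, x*⟩ = ‖x‖² = ‖x*‖²}`. -/
def dualityMap (x : X) : Set (X →L[ℝ] ℝ) :=
  {x' | x' x = ‖x‖ ^ 2 ∧ ‖x‖ ^ 2 = ‖x'‖ ^ 2}

/-- A monotone subset of `X × X*`. -/
def MonotoneSet (A : Set (X × (X →L[ℝ] ℝ))) : Prop :=
  ∀ p ∈ A, ∀ q ∈ A, 0 ≤ (p.2 - q.2) (p.1 - q.1)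

/-- A maximal monotone subset of `X × X*`. -/
def MaximalMonotoneSet (A : Set (X × (X →L[ℝ] ℝ))) : Prop :=
  MonotoneSet A ∧
    ∀ p : X × (X →L[ℝ] ℝ), (∀ q ∈ A, 0 ≤ (p.2 - q.2) (p.1 - q.1)) → p ∈ A

/-- The Fitzpatrick function of an operator `A : X ⇉ X*`:
`H_A(x, x*) = sup {⟨u, x*⟩ + ⟨x, u*⟩ - ⟨u, u*⟩ : (u, u*) ∈ A}`. -/
def fitz (A : Set (X × (X →L[ℝ] ℝ))) (p : X × (X →L[ℝ] ℝ)) : EReal :=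
  ⨆ q ∈ A, ((p.2 q.1 + q.2 p.1 - q.2 q.1 : ℝ) : EReal)

/-- `(x*, x) ∈ ∂H_A(u, u*)`, the subdifferential of the Fitzpatrick function at `(u, u*)`
with the pairing `⟨(x*, x), (z, z*)⟩ = ⟨z, x*⟩ + ⟨x, z*⟩`:
`⟨z - u, x*⟩ + ⟨x, z* - u*⟩ + H(u, u*) ≤ H(z, z*)` for all `(z, z*)`. -/
def inSubdiffFitz (A : Set (X × (X →L[ℝ] ℝ))) (u : X) (u' : X →L[ℝ] ℝ)
    (x' : X →L[ℝ] ℝ) (x : X) : Prop :=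
  ∀ z : X, ∀ z' : X →L[ℝ] ℝ,
    ((x' (z - u) + (z' - u') x : ℝ) : EReal) + fitz A (u, u') ≤ fitz A (z, z')

section Helpers

variable {X : Type*} [NormedAddCommGroup X] [NormedSpace ℝ X] [CompleteSpace X]

lemma le_fitz' (A : Set (X × (X →L[ℝ] ℝ))) {q : X × (X →L[ℝ] ℝ)} (hq : q ∈ A)
    (p : X × (X →L[ℝ] ℝ)) :
    ((p.2 q.1 + q.2 p.1 - q.2 q.1 : ℝ) : EReal) ≤ fitz A p := by
  unfold fitz; exact le_biSup (fun q => ((p.2 q.1 + q.2 p.1 - q.2 q.1 : ℝ) : EReal)) hq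

lemma fitz_le' (A : Set (X × (X →L[ℝ] ℝ))) (p : X × (X →L[ℝ] ℝ)) {c : EReal}
    (h : ∀ q ∈ A, ((p.2 q.1 + q.2 p.1 - q.2 q.1 : ℝ) : EReal) ≤ c) :
    fitz A p ≤ c := by
  unfold fitz; exact iSup₂_le h

/-- The Fitzpatrick function dominates the pairing everywhere (maximality). -/
lemma pairing_le_fitz {A : Set (X × (X →L[ℝ] ℝ))} (hA : MaximalMonotoneSet A)
    (z : X) (z' : X →L[ℝ] ℝ) : ((z' z : ℝ) : EReal) ≤ fitz A (z, z') := by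
  by_contra h
  push_neg at h
  have hz : (z, z') ∈ A := by
    apply hA.2
    rintro ⟨u, u'⟩ hu
    have h1 := (le_fitz' A hu (z, z')).trans_lt h
    have h2 : (z' u + u' z - u' u : ℝ) < z' z := EReal.coe_lt_coe_iff.mp h1
    simp only [ContinuousLinearMap.sub_apply, map_sub]
    linarith
  have h3 := le_fitz' A hz (z, z')
  simp only [add_sub_cancel_right] at h3
  exact absurd h3 (not_le.mpr h)

/-- For `(x,x') ∈ A` monotone, `fitz A (x,x') ≤ ⟨x,x'⟩`. -/
lemma fitz_le_pairing {A : Set (X × (X →L[ℝ] ℝ))} (hA : MonotoneSet A)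
    {x : X} {x' : X →L[ℝ] ℝ} (hx : (x, x') ∈ A) :
    fitz A (x, x') ≤ ((x' x : ℝ) : EReal) := by
  apply fitz_le'
  rintro ⟨u, u'⟩ hu
  have h0 := hA (x, x') hx (u, u') hu
  simp only [ContinuousLinearMap.sub_apply, map_sub] at h0
  have : (x' u + u' x - u' u : ℝ) ≤ x' x := by linarith
  exact_mod_cast this

end Helpers

set_option maxHeartbeats 1000000 in
/-- `0 ∈ R(J_X + A)` iff `(0, 0) ∈ R(J_X ⊗ J_X⁻¹ + ∂H_A)`. -/
theorem zero_in_range_iff (A : Set (X × (X →L[ℝ] ℝ))) (hA : MaximalMonotoneSet A) :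
    (∃ (x : X) (y' x' : X →L[ℝ] ℝ), y' ∈ dualityMap x ∧ (x, x') ∈ A ∧ y' + x' = 0) ↔
      (∃ (x : X) (x' : X →L[ℝ] ℝ) (p : X →L[ℝ] ℝ) (q : X) (w' : X →L[ℝ] ℝ) (w : X),
        p ∈ dualityMap x ∧ x' ∈ dualityMap q ∧ inSubdiffFitz A x x' w' w ∧
          p + w' = 0 ∧ q + w = 0) := by
  constructor
  · rintro ⟨x, y', x', hy', hxA, hsum⟩
    have hx' : x' = -y' := eq_neg_of_add_eq_zero_right hsum
    refine ⟨x, x', y', -x, x', x, hy', ?_, ?_, hsum, by abel⟩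
    · -- x' ∈ dualityMap (-x)
      obtain ⟨h1, h2⟩ := hy'
      subst hx'
      refine ⟨?_, ?_⟩
      · simp only [ContinuousLinearMap.neg_apply, map_neg, neg_neg, norm_neg]
        exact h1
      · simp only [norm_neg]
        exact h2
    · -- inSubdiffFitz A x x' x' x
      intro z z'
      have hstep : fitz A (x, x') ≤ ((x' x : ℝ) : EReal) := fitz_le_pairing hA.1 hxA
      calc ((x' (z - x) + (z' - x') x : ℝ) : EReal) + fitz A (x, x')
          ≤ ((x' (z - x) + (z' - x') x : ℝ) : EReal) + ((x' x : ℝ) : EReal) :=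
            add_le_add le_rfl hstep
        _ = ((x' (z - x) + (z' - x') x + x' x : ℝ) : EReal) := (EReal.coe_add _ _).symm
        _ = ((z' x + x' z - x' x : ℝ) : EReal) := by
            norm_cast
            simp only [map_sub, ContinuousLinearMap.sub_apply]
            ring
        _ ≤ fitz A (z, z') := le_fitz' A hxA (z, z')
  · rintro ⟨x, x', p, q, w', w, hp, hq, hsub, hpw, hqw⟩
    have hw' : w' = -p := eq_neg_of_add_eq_zero_right hpw
    have hw : w = -q := eq_neg_of_add_eq_zero_right hqw
    subst hw' hw
    obtain ⟨hpx, hpn⟩ := hp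
    obtain ⟨hx'q, hqn⟩ := hq
    have hpe : ‖p‖ = ‖x‖ := by
      rw [← Real.sqrt_sq (norm_nonneg p), ← Real.sqrt_sq (norm_nonneg x), hpn]
    have hqe : ‖x'‖ = ‖q‖ := by
      rw [← Real.sqrt_sq (norm_nonneg x'), ← Real.sqrt_sq (norm_nonneg q), hqn]
    have hb1 : -(‖x‖ * ‖q‖) ≤ p q := by
      have h := p.le_opNorm q
      rw [Real.norm_eq_abs] at h
      have := (abs_le.mp h).1
      rw [hpe] at this
      linarith
    have hb2 : -(‖q‖ * ‖x‖) ≤ x' x := by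
      have h := x'.le_opNorm x
      rw [Real.norm_eq_abs] at h
      have := (abs_le.mp h).1
      rw [hqe] at this
      linarith
    -- key real inequality from the subdifferential condition
    have K : ∀ z : X, ∀ z' : X →L[ℝ] ℝ, (z, z') ∈ A →
        (-p) (z - x) + (z' - x') (-q) + x' x ≤ z' z := by
      intro z z' hz
      have h1 := hsub z z'
      have h2 : fitz A (z, z') ≤ ((z' z : ℝ) : EReal) := fitz_le_pairing hA.1 hz
      have h3 : ((x' x : ℝ) : EReal) ≤ fitz A (x, x') := pairing_le_fitz hA x x'
      have h4 : (((-p) (z - x) + (z' - x') (-q) + x' x : ℝ) : EReal) ≤ ((z' z : ℝ) : EReal) := by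
        calc (((-p) (z - x) + (z' - x') (-q) + x' x : ℝ) : EReal)
            = (((-p) (z - x) + (z' - x') (-q) : ℝ) : EReal) + ((x' x : ℝ) : EReal) := by
              rw [← EReal.coe_add]
          _ ≤ (((-p) (z - x) + (z' - x') (-q) : ℝ) : EReal) + fitz A (x, x') :=
              add_le_add le_rfl h3
          _ ≤ fitz A (z, z') := h1
          _ ≤ ((z' z : ℝ) : EReal) := h2
      exact_mod_cast h4
    -- (−q, −p) ∈ A by maximality
    have hWA : ((-q : X), (-p : X →L[ℝ] ℝ)) ∈ A := by
      apply hA.2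
      rintro ⟨z, z'⟩ hz
      have hK := K z z' hz
      simp only [ContinuousLinearMap.sub_apply, ContinuousLinearMap.neg_apply,
        map_sub, map_neg] at hK ⊢
      nlinarith [sq_nonneg (‖x‖ - ‖q‖), norm_nonneg x, norm_nonneg q]
    -- use K at (−q, −p)
    have hK2 := K (-q) (-p) hWA
    simp only [ContinuousLinearMap.sub_apply, ContinuousLinearMap.neg_apply,
      map_sub, map_neg, neg_neg] at hK2
    clear K hsub hpw hqw
    -- hK2 : p q + p x + (p q + x' q) + x' x ≤ p q  (roughly)
    have h1 : p q ≤ -‖x‖ ^ 2 - ‖q‖ ^ 2 - x' x := by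
      rw [hpx] at hK2; rw [hx'q] at hK2; linarith
    have hab : ‖x‖ = ‖q‖ := by
      have hsq : (‖x‖ - ‖q‖) ^ 2 ≤ 0 := by nlinarith [hb1, hb2, h1]
      have h0 : (‖x‖ - ‖q‖) ^ 2 = 0 := le_antisymm hsq (sq_nonneg _)
      have := pow_eq_zero_iff (n := 2) (by norm_num) |>.mp h0
      linarith [sub_eq_zero.mp this]
    rw [hab] at h1 hb1 hb2
    have hpq : p q = -‖q‖ ^ 2 := by
      have hle : p q ≤ -‖q‖ ^ 2 := by nlinarith [hb1, hb2, h1]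
      have hge : -‖q‖ ^ 2 ≤ p q := by nlinarith [hb1]
      linarith
    refine ⟨-q, p, -p, ⟨?_, ?_⟩, hWA, by abel⟩
    · simp only [map_neg, norm_neg]
      rw [hpq]; ring
    · rw [norm_neg, ← hab, ← hpe]
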